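/- Picard-iteration uniform bound: with the hypotheses and notation of the Picard-iteration increment bound (continuous K, χ, Δ on [0,T], |K(t,τ)| ≤ p(t)q(τ) for 0 ≤ τ ≤ t ≤ T, 𝒦 := sup q, 𝒦₀ := sup pq, φ(t) := ∫₀ᵗ|Δ|, ψ(t) := ∫₀ᵗ|χ|, iterates ε₀ := 0 and ε_{m+1}(t) := ∫₀ᵗ K(t,τ)(χ(τ)ε_m(τ) + Δ(τ)) dτ), every iterate satisfies |ε_m(t)| ≤ p(t) · 𝒦 · φ(t) · exp( 𝒦₀ ψ(t) ) for all m ≥ 0 and t ∈ [0,T]. -/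

import Mathlib

open MeasureTheory Set intervalIntegral

/-- Picard-iteration uniform bound: with `|K(t,τ)| ≤ p(t)q(τ)` for `0 ≤ τ ≤ t ≤ T`,
`𝒦 = sup q`, `𝒦₀ = sup pq`, `φ(t) = ∫₀ᵗ|Δ|`, `ψ(t) = ∫₀ᵗ|χ|`, every Picard iterate
satisfies `|ε_m(t)| ≤ p(t)·𝒦·φ(t)·exp(𝒦₀ψ(t))`. -/
theorem picard_uniform_bound (T : ℝ) (hT : 0 < T)
    (K : ℝ → ℝ → ℂ) (χ Δ : ℝ → ℂ) (p q : ℝ → ℝ)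
    (hKc : ContinuousOn (fun z : ℝ × ℝ => K z.1 z.2) (Set.Icc 0 T ×ˢ Set.Icc 0 T))
    (hχc : ContinuousOn χ (Set.Icc 0 T)) (hΔc : ContinuousOn Δ (Set.Icc 0 T))
    (hpc : ContinuousOn p (Set.Icc 0 T)) (hqc : ContinuousOn q (Set.Icc 0 T))
    (hp0 : ∀ t ∈ Set.Icc (0:ℝ) T, 0 ≤ p t) (hq0 : ∀ t ∈ Set.Icc (0:ℝ) T, 0 ≤ q t)
    (hKb : ∀ t τ : ℝ, 0 ≤ τ → τ ≤ t → t ≤ T → ‖K t τ‖ ≤ p t * q τ)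
    (ε : ℕ → ℝ → ℂ)
    (hε0 : ∀ t : ℝ, ε 0 t = 0)
    (hεs : ∀ (m : ℕ) (t : ℝ),
      ε (m + 1) t = ∫ τ in (0:ℝ)..t, K t τ * (χ τ * ε m τ + Δ τ)) :
    ∀ (m : ℕ), ∀ t ∈ Set.Icc (0:ℝ) T,
      ‖ε m t‖ ≤
        p t * sSup (q '' Set.Icc 0 T) * (∫ τ in (0:ℝ)..t, ‖Δ τ‖) *
          Real.exp (sSup ((fun τ => p τ * q τ) '' Set.Icc 0 T) *
            ∫ τ in (0:ℝ)..t, ‖χ τ‖) := by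
  set 𝒦 : ℝ := sSup (q '' Set.Icc 0 T) with h𝒦def
  set 𝒦₀ : ℝ := sSup ((fun τ => p τ * q τ) '' Set.Icc 0 T) with h𝒦₀def
  set aχ : ℝ → ℝ := fun τ => ‖χ τ‖ with haχdef
  set aΔ : ℝ → ℝ := fun τ => ‖Δ τ‖ with haΔdef
  set φ : ℝ → ℝ := fun x => ∫ τ in (0:ℝ)..x, aΔ τ with hφdef
  set ψ : ℝ → ℝ := fun x => ∫ τ in (0:ℝ)..x, aχ τ with hψdef
  set E : ℝ → ℝ := fun x => Real.exp (𝒦₀ * ψ x) with hEdef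
  have hcomp : IsCompact (Set.Icc (0:ℝ) T) := isCompact_Icc
  have h0T : (0:ℝ) ∈ Set.Icc (0:ℝ) T := ⟨le_rfl, hT.le⟩
  -- sup bounds
  have hq𝒦 : ∀ τ ∈ Set.Icc (0:ℝ) T, q τ ≤ 𝒦 := fun τ hτ =>
    le_csSup (hcomp.bddAbove_image hqc) ⟨τ, hτ, rfl⟩
  have hpq𝒦₀ : ∀ τ ∈ Set.Icc (0:ℝ) T, p τ * q τ ≤ 𝒦₀ := fun τ hτ =>
    le_csSup (hcomp.bddAbove_image (hpc.mul hqc)) ⟨τ, hτ, rfl⟩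
  have h𝒦0 : 0 ≤ 𝒦 := (hq0 0 h0T).trans (hq𝒦 0 h0T)
  have h𝒦₀0 : 0 ≤ 𝒦₀ := (mul_nonneg (hp0 0 h0T) (hq0 0 h0T)).trans (hpq𝒦₀ 0 h0T)
  -- continuity of |χ|, |Δ|
  have haχc : ContinuousOn aχ (Set.Icc 0 T) := continuous_norm.comp_continuousOn hχc
  have haΔc : ContinuousOn aΔ (Set.Icc 0 T) := continuous_norm.comp_continuousOn hΔc
  -- generic interval integrability of functions continuous on [0,T]
  have hint : ∀ (f : ℝ → ℝ), ContinuousOn f (Set.Icc 0 T) → ∀ a b : ℝ, 0 ≤ a → a ≤ b → b ≤ T →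
      IntervalIntegrable f volume a b := by
    intro f hf a b h0 hab hbT
    refine (hf.mono ?_).intervalIntegrable
    rw [Set.uIcc_of_le hab]
    exact Set.Icc_subset_Icc h0 hbT
  -- continuity of primitives
  have hφc : ContinuousOn φ (Set.Icc 0 T) := by
    have := continuousOn_primitive_interval
      (f := aΔ) (a := (0:ℝ)) (b := T) (μ := volume) ?_
    · rwa [Set.uIcc_of_le hT.le] at this
    · rw [Set.uIcc_of_le hT.le]; exact haΔc.integrableOn_Icc
  have hψc : ContinuousOn ψ (Set.Icc 0 T) := by
    have := continuousOn_primitive_interval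
      (f := aχ) (a := (0:ℝ)) (b := T) (μ := volume) ?_
    · rwa [Set.uIcc_of_le hT.le] at this
    · rw [Set.uIcc_of_le hT.le]; exact haχc.integrableOn_Icc
  have hEc : ContinuousOn E (Set.Icc 0 T) :=
    Real.continuous_exp.comp_continuousOn (continuousOn_const.mul hψc)
  -- nonnegativity and monotonicity of φ
  have hφ0 : ∀ t ∈ Set.Icc (0:ℝ) T, 0 ≤ φ t := by
    intro t ht
    exact intervalIntegral.integral_nonneg ht.1 (fun τ _ => norm_nonneg _)
  have hφmono : ∀ t ∈ Set.Icc (0:ℝ) T, ∀ s ∈ Set.Icc 0 t, φ s ≤ φ t := by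
    intro t ht s hs
    have h1 : IntervalIntegrable aΔ volume 0 s := hint _ haΔc 0 s le_rfl hs.1 (hs.2.trans ht.2)
    have h2 : IntervalIntegrable aΔ volume s t := hint _ haΔc s t hs.1 hs.2 ht.2
    have : φ s + ∫ τ in s..t, aΔ τ = φ t :=
      intervalIntegral.integral_add_adjacent_intervals h1 h2
    have hnn : 0 ≤ ∫ τ in s..t, aΔ τ :=
      intervalIntegral.integral_nonneg hs.2 (fun τ _ => norm_nonneg _)
    linarith
  -- FTC: ∫₀ᵗ 𝒦₀|χ| E = E t - 1
  have hFTC : ∀ t ∈ Set.Icc (0:ℝ) T, ∫ τ in (0:ℝ)..t, 𝒦₀ * aχ τ * E τ = E t - 1 := by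
    intro t ht
    have hE0 : E 0 = 1 := by
      simp [hEdef, hψdef, intervalIntegral.integral_same]
    have hderiv : ∀ x ∈ Set.Ioo (0:ℝ) t, HasDerivWithinAt E (𝒦₀ * aχ x * E x) (Set.Ioi x) x := by
      intro x hx
      have hxT : x ∈ Set.Ioo (0:ℝ) T := ⟨hx.1, lt_of_lt_of_le hx.2 ht.2⟩
      have hmem : Set.Icc (0:ℝ) T ∈ nhds x := Icc_mem_nhds hxT.1 hxT.2
      have hca : ContinuousAt aχ x := haχc.continuousAt hmem
      have hmeas : StronglyMeasurableAtFilter aχ (nhds x) volume :=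
        ContinuousOn.stronglyMeasurableAtFilter isOpen_Ioo
          (haχc.mono Set.Ioo_subset_Icc_self) x hxT
      have hintx : IntervalIntegrable aχ volume 0 x :=
        hint _ haχc 0 x le_rfl hxT.1.le hxT.2.le
      have hψ' : HasDerivAt ψ (aχ x) x :=
        intervalIntegral.integral_hasDerivAt_right hintx hmeas hca
      have hE' : HasDerivAt E (Real.exp (𝒦₀ * ψ x) * (𝒦₀ * aχ x)) x :=
        (hψ'.const_mul 𝒦₀).exp
      have : HasDerivAt E (𝒦₀ * aχ x * E x) x := by
        convert hE' using 1
        simp [hEdef]; ring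
      exact this.hasDerivWithinAt
    have hcont : ContinuousOn E (Set.Icc 0 t) :=
      hEc.mono (Set.Icc_subset_Icc le_rfl ht.2)
    have hint' : IntervalIntegrable (fun τ => 𝒦₀ * aχ τ * E τ) volume 0 t :=
      hint _ ((continuousOn_const.mul haχc).mul hEc) 0 t le_rfl ht.1 ht.2
    rw [intervalIntegral.integral_eq_sub_of_hasDeriv_right_of_le ht.1 hcont hderiv hint', hE0]
  -- main induction
  intro m
  induction m with
  | zero =>
    intro t ht
    simp only [hε0, norm_zero]
    have : (0:ℝ) ≤ p t * 𝒦 * φ t := mul_nonneg (mul_nonneg (hp0 t ht) h𝒦0) (hφ0 t ht)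
    exact mul_nonneg this (Real.exp_nonneg _)
  | succ m ih =>
    intro t ht
    show ‖ε (m+1) t‖ ≤ p t * 𝒦 * φ t * E t
    rw [hεs]
    set B : ℝ → ℝ := fun τ => p τ * 𝒦 * φ τ * E τ with hBdef
    have hBc : ContinuousOn B (Set.Icc 0 T) := ((hpc.mul continuousOn_const).mul hφc).mul hEc
    set g : ℝ → ℝ := fun τ => p t * (q τ * (aχ τ * B τ + aΔ τ)) with hgdef
    have hgc : ContinuousOn g (Set.Icc 0 T) :=
      continuousOn_const.mul (hqc.mul ((haχc.mul hBc).add haΔc))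
    have hgint : IntervalIntegrable g volume 0 t := hint _ hgc 0 t le_rfl ht.1 ht.2
    set c1 : ℝ := p t * (𝒦 * φ t) with hc1def
    set h : ℝ → ℝ := fun τ => c1 * (𝒦₀ * aχ τ * E τ) + (p t * 𝒦) * aΔ τ with hhdef
    have hhint1 : IntervalIntegrable (fun τ => c1 * (𝒦₀ * aχ τ * E τ)) volume 0 t :=
      hint _ (continuousOn_const.mul ((continuousOn_const.mul haχc).mul hEc)) 0 t le_rfl ht.1 ht.2
    have hhint2 : IntervalIntegrable (fun τ => (p t * 𝒦) * aΔ τ) volume 0 t :=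
      hint _ (continuousOn_const.mul haΔc) 0 t le_rfl ht.1 ht.2
    have hhint : IntervalIntegrable h volume 0 t := hhint1.add hhint2
    -- step 1: |∫| ≤ ∫ g
    have step1 : ‖∫ τ in (0:ℝ)..t, K t τ * (χ τ * ε m τ + Δ τ)‖ ≤
        ∫ τ in (0:ℝ)..t, g τ := by
      have hae : ∀ᵐ τ ∂(volume.restrict (Set.uIoc (0:ℝ) t)),
          ‖K t τ * (χ τ * ε m τ + Δ τ)‖ ≤ g τ := by
        rw [Set.uIoc_of_le ht.1]
        filter_upwards [ae_restrict_mem measurableSet_Ioc] with τ hτ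
        have hτT : τ ∈ Set.Icc (0:ℝ) T := ⟨hτ.1.le, hτ.2.trans ht.2⟩
        have hKbd : ‖K t τ‖ ≤ p t * q τ := hKb t τ hτ.1.le hτ.2 ht.2
        have hεbd : ‖ε m τ‖ ≤ B τ := by
          have := ih τ hτT
          simpa [hBdef] using this
        have htri : ‖χ τ * ε m τ + Δ τ‖ ≤ aχ τ * B τ + aΔ τ := by
          calc ‖χ τ * ε m τ + Δ τ‖
              ≤ ‖χ τ * ε m τ‖ + ‖Δ τ‖ := norm_add_le _ _
            _ = aχ τ * ‖ε m τ‖ + aΔ τ := by rw [norm_mul]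
            _ ≤ aχ τ * B τ + aΔ τ := by
                have := mul_le_mul_of_nonneg_left hεbd (norm_nonneg (χ τ))
                linarith
        calc ‖K t τ * (χ τ * ε m τ + Δ τ)‖
            = ‖K t τ‖ * ‖χ τ * ε m τ + Δ τ‖ := by
              rw [norm_mul]
          _ ≤ (p t * q τ) * (aχ τ * B τ + aΔ τ) := by
              apply mul_le_mul hKbd htri (norm_nonneg _)
              exact (norm_nonneg _).trans hKbd
          _ = g τ := by rw [hgdef]; ring
      have hgnn : 0 ≤ ∫ τ in (0:ℝ)..t, g τ := by
        apply intervalIntegral.integral_nonneg ht.1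
        intro τ hτ
        have hτT : τ ∈ Set.Icc (0:ℝ) T := ⟨hτ.1, hτ.2.trans ht.2⟩
        have hB : 0 ≤ B τ :=
          mul_nonneg (mul_nonneg (mul_nonneg (hp0 τ hτT) h𝒦0) (hφ0 τ hτT)) (Real.exp_nonneg _)
        have : 0 ≤ q τ * (aχ τ * B τ + aΔ τ) :=
          mul_nonneg (hq0 τ hτT)
            (add_nonneg (mul_nonneg (norm_nonneg _) hB) (norm_nonneg _))
        exact mul_nonneg (hp0 t ht) this
      calc ‖∫ τ in (0:ℝ)..t, K t τ * (χ τ * ε m τ + Δ τ)‖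
          ≤ |∫ τ in (0:ℝ)..t, g τ| := intervalIntegral.norm_integral_le_abs_of_norm_le hae hgint
        _ = ∫ τ in (0:ℝ)..t, g τ := abs_of_nonneg hgnn
    -- step 2: ∫ g ≤ ∫ h
    have step2 : (∫ τ in (0:ℝ)..t, g τ) ≤ ∫ τ in (0:ℝ)..t, h τ := by
      apply intervalIntegral.integral_mono_on ht.1 hgint hhint
      intro τ hτ
      have hτT : τ ∈ Set.Icc (0:ℝ) T := ⟨hτ.1, hτ.2.trans ht.2⟩
      have key : q τ * (aχ τ * B τ + aΔ τ) ≤ (𝒦 * φ t) * (𝒦₀ * aχ τ * E τ) + 𝒦 * aΔ τ := by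
        have h1 : q τ * (aχ τ * B τ) ≤ (𝒦 * φ t) * (𝒦₀ * aχ τ * E τ) := by
          have hfac : (0:ℝ) ≤ 𝒦 * (aχ τ * E τ) :=
            mul_nonneg h𝒦0 (mul_nonneg (norm_nonneg _) (Real.exp_nonneg _))
          have hle : p τ * q τ * φ τ ≤ 𝒦₀ * φ t :=
            mul_le_mul (hpq𝒦₀ τ hτT) (hφmono t ht τ hτ) (hφ0 τ hτT) h𝒦₀0
          calc q τ * (aχ τ * B τ) = (p τ * q τ * φ τ) * (𝒦 * (aχ τ * E τ)) := by
                rw [hBdef]; ring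
            _ ≤ (𝒦₀ * φ t) * (𝒦 * (aχ τ * E τ)) := mul_le_mul_of_nonneg_right hle hfac
            _ = (𝒦 * φ t) * (𝒦₀ * aχ τ * E τ) := by ring
        have h2 : q τ * aΔ τ ≤ 𝒦 * aΔ τ :=
          mul_le_mul_of_nonneg_right (hq𝒦 τ hτT) (norm_nonneg _)
        calc q τ * (aχ τ * B τ + aΔ τ) = q τ * (aχ τ * B τ) + q τ * aΔ τ := by ring
          _ ≤ (𝒦 * φ t) * (𝒦₀ * aχ τ * E τ) + 𝒦 * aΔ τ := add_le_add h1 h2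
      calc g τ = p t * (q τ * (aχ τ * B τ + aΔ τ)) := rfl
        _ ≤ p t * ((𝒦 * φ t) * (𝒦₀ * aχ τ * E τ) + 𝒦 * aΔ τ) :=
            mul_le_mul_of_nonneg_left key (hp0 t ht)
        _ = h τ := by rw [hhdef, hc1def]; ring
    -- step 3: compute ∫ h
    have step3 : (∫ τ in (0:ℝ)..t, h τ) = c1 * (E t - 1) + (p t * 𝒦) * φ t := by
      rw [hhdef]
      rw [intervalIntegral.integral_add hhint1 hhint2, intervalIntegral.integral_const_mul,
        intervalIntegral.integral_const_mul, hFTC t ht]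
    calc ‖∫ τ in (0:ℝ)..t, K t τ * (χ τ * ε m τ + Δ τ)‖
        ≤ ∫ τ in (0:ℝ)..t, g τ := step1
      _ ≤ ∫ τ in (0:ℝ)..t, h τ := step2
      _ = c1 * (E t - 1) + (p t * 𝒦) * φ t := step3
      _ = p t * 𝒦 * φ t * E t := by rw [hc1def]; ring
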